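/- Let K be a field, let i ∈ K satisfy i² = −1, and let t, x, y ∈ K with y ≠ 0 satisfy (x + y)·(x·y − 1) − 2·i·t·x·y = 0. Then, setting ξ := x/y and η := (x + y + i·t·x·y)/y², one has η² = ξ³ + (2 − t²)·ξ² + ξ. -/

import Mathlib

/-- The change of coordinates ξ := x/y, η := (x+y+itxy)/y² transforms Beauville's equation
(x+y)(xy−1)−2itxy=0 for Γ₀(8) into the Weierstrass form η² = ξ³+(2−t²)ξ²+ξ. -/
theorem stmt_1 {K : Type*} [Field K] (i t x y : K) (hi : i ^ 2 = -1) (hy : y ≠ 0)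
    (h : (x + y) * (x * y - 1) - 2 * i * t * (x * y) = 0) :
    ((x + y + i * t * (x * y)) / y ^ 2) ^ 2 =
      (x / y) ^ 3 + (2 - t ^ 2) * (x / y) ^ 2 + x / y := by
  have key : (x + y + i * t * (x * y)) ^ 2 = x ^ 3 * y + (2 - t ^ 2) * x ^ 2 * y ^ 2 + x * y ^ 3 := by
    linear_combination -(x + y) * h + t ^ 2 * x ^ 2 * y ^ 2 * hi
  field_simp

  linear_combination key
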